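/- If two indices i,j are drawn independently and uniformly from {1,...,n} and x' is obtained from x by a gossip average between i and j, then E[mean of squares of x' | x] = (1 - 1/n)·(mean of squares of x) + (1/n)·(mean of x)². -/
import Mathlib


open Finset

noncomputable def mean {n : ℕ} (v : Fin n → ℝ) : ℝ := (∑ k, v k) / n

noncomputable def meanSq {n : ℕ} (v : Fin n → ℝ) : ℝ := (∑ k, v k ^ 2) / n

noncomputable def gossip {n : ℕ} (v : Fin n → ℝ) (i j : Fin n) : Fin n → ℝ :=
  fun k => if k = i ∨ k = j then (v i + v j) / 2 else v k

lemma gossip_sumSq {n : ℕ} (x : Fin n → ℝ) (i j : Fin n) :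
    ∑ k, (gossip x i j k) ^ 2 = ∑ k, x k ^ 2 - (x i - x j) ^ 2 / 2 := by
  by_cases hij : i = j
  · subst hij
    have : ∀ k, gossip x i i k = x k := by
      intro k
      simp only [gossip, or_self]
      split
      · next h => subst h; ring
      · rfl
    simp [this]
  · have hsub : ({i, j} : Finset (Fin n)) ⊆ univ := subset_univ _
    have key : ∑ k, ((gossip x i j k) ^ 2 - x k ^ 2)
        = ∑ k ∈ ({i, j} : Finset (Fin n)), ((gossip x i j k) ^ 2 - x k ^ 2) := by
      refine (Finset.sum_subset hsub ?_).symm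
      intro k _ hk
      simp only [mem_insert, mem_singleton] at hk
      push_neg at hk
      have : gossip x i j k = x k := by
        simp [gossip, hk.1, hk.2]
      rw [this]; ring
    have hpair : ∑ k ∈ ({i, j} : Finset (Fin n)), ((gossip x i j k) ^ 2 - x k ^ 2)
        = ((gossip x i j i) ^ 2 - x i ^ 2) + ((gossip x i j j) ^ 2 - x j ^ 2) :=
      Finset.sum_pair hij
    have hgi : gossip x i j i = (x i + x j) / 2 := by simp [gossip]
    have hgj : gossip x i j j = (x i + x j) / 2 := by simp [gossip]
    have := key
    rw [Finset.sum_sub_distrib] at this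
    rw [hpair, hgi, hgj] at this
    linarith [this]

/-- With `i, j` i.i.d. uniform on `{1,…,n}`, the expected mean of squares after a gossip
step is `(1 - 1/n) * (mean of squares) + (1/n) * (mean)²`. -/
theorem gossip_expected_meanSq (n : ℕ) (hn : 0 < n) (x : Fin n → ℝ) :
    (∑ i, ∑ j, meanSq (gossip x i j)) / (n : ℝ) ^ 2
      = (1 - 1 / n) * meanSq x + (1 / n) * (mean x) ^ 2 := by
  have hn' : (n : ℝ) ≠ 0 := Nat.cast_ne_zero.mpr hn.ne'
  set S1 := ∑ k, x k with hS1
  set S2 := ∑ k, x k ^ 2 with hS2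
  have hdiff : ∑ i, ∑ j, (x i - x j) ^ 2 = 2 * n * S2 - 2 * S1 ^ 2 := by
    have : ∀ i j : Fin n, (x i - x j) ^ 2 = x i ^ 2 - 2 * (x i * x j) + x j ^ 2 := by
      intro i j; ring
    simp only [this, Finset.sum_add_distrib, Finset.sum_sub_distrib, ← Finset.mul_sum,
      ← Finset.sum_mul, Finset.sum_const, card_univ, Fintype.card_fin, nsmul_eq_mul]
    rw [← hS1, ← hS2]
    ring
  have hmain : ∑ i, ∑ j, meanSq (gossip x i j)
      = (n ^ 2 * S2 - (2 * n * S2 - 2 * S1 ^ 2) / 2) / n := by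
    have : ∀ i j : Fin n, meanSq (gossip x i j) = (S2 - (x i - x j) ^ 2 / 2) / n := by
      intro i j
      unfold meanSq
      rw [gossip_sumSq]
    simp only [this, div_eq_mul_inv, ← Finset.sum_mul, Finset.sum_sub_distrib,
      Finset.sum_const, card_univ, Fintype.card_fin, nsmul_eq_mul]
    rw [hdiff]
    ring
  rw [hmain]
  unfold meanSq mean
  rw [← hS1, ← hS2]
  field_simp
  ring
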